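/- Let T be a compactly generated triangulated category and y : T → Mod-T^c the restricted Yoneda functor, yX = Hom_T(-, X) restricted to compact objects. If E is a pure-injective object of T (meaning yE is injective in Mod-T^c, equivalently the natural map Hom_T(X, E) → Hom(yX, yE) is bijective for all X), then for every set I the summation map E^{(I)} → E factors through the canonical map E^{(I)} → E^{I}. -/

import Mathlib

open CategoryTheory Limits Pretriangulated

universe v u

variable {C : Type u} [Category.{v} C] [Preadditive C] [HasZeroObject C] [HasShift C ℤ]
  [∀ n : ℤ, (shiftFunctor C n).Additive] [Pretriangulated C]


/-- `X` is a direct summand (retract) of `Y`. -/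
def IsSummand {C : Type u} [Category.{v} C] (X Y : C) : Prop :=
  ∃ (i : X ⟶ Y) (r : Y ⟶ X), i ≫ r = 𝟙 X

/-- An object `K` is compact if `Hom(K, -)` preserves all set-indexed coproducts. -/
def IsCompactObj (K : C) : Prop :=
  ∀ I : Type v, Nonempty (PreservesColimitsOfShape (Discrete I)
    (preadditiveCoyoneda.obj (Opposite.op K)))

/-- The restricted Yoneda functor `y : T ⥤ Mod-T^c`, sending `X` to the restriction of
`Hom_T(-, X)` to the subcategory `Tc` of compact objects. -/
def restrictedYoneda (Tc : Set C) :
    C ⥤ ((ObjectProperty.FullSubcategory (Tc ·))ᵒᵖ ⥤ AddCommGrpCat.{v}) :=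
  preadditiveYoneda ⋙ (Functor.whiskeringLeft _ _ _).obj (ObjectProperty.ι (Tc ·)).op

open scoped Classical

lemma key_compact {C : Type u} [Category.{v} C] [Preadditive C] [HasCoproducts.{v} C]
    {I : Type v} {E : C} {K : C}
    (hK : PreservesColimitsOfShape (Discrete I) (preadditiveCoyoneda.obj (Opposite.op K)))
    (g : K ⟶ ∐ (fun _ : I => E))
    (hg : ∀ j : I, g ≫ Sigma.desc (fun i => if i = j then (𝟙 E) else 0) = 0) :
    g = 0 := by
  let p : I → ((∐ fun _ : I => E) ⟶ E) := fun j => Sigma.desc (fun i => if i = j then (𝟙 E) else 0)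
  let Q : (K ⟶ ∐ fun _ : I => E) → Prop := fun g =>
    ∃ s : Finset I, (∀ j ∉ s, g ≫ p j = 0) ∧
      g = ∑ j ∈ s, (g ≫ p j) ≫ Sigma.ι (fun _ : I => E) j
  have hQ : ∀ g : K ⟶ ∐ fun _ : I => E, Q g := by
    intro g
    let T : AddSubgroup (K ⟶ ∐ fun _ : I => E) :=
      { carrier := setOf Q
        zero_mem' := ⟨∅, fun j _ => zero_comp, by simp⟩
        add_mem' := by
          rintro a b ⟨s₁, hv₁, he₁⟩ ⟨s₂, hv₂, he₂⟩
          refine ⟨s₁ ∪ s₂, fun j hj => ?_, ?_⟩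
          · rw [Preadditive.add_comp, hv₁ j (fun h => hj (Finset.mem_union_left _ h)),
              hv₂ j (fun h => hj (Finset.mem_union_right _ h)), add_zero]
          · have h₁ : a = ∑ j ∈ s₁ ∪ s₂, (a ≫ p j) ≫ Sigma.ι (fun _ : I => E) j :=
              he₁.trans (Finset.sum_subset Finset.subset_union_left
                (fun j _ hj => by rw [hv₁ j hj, zero_comp]))
            have h₂ : b = ∑ j ∈ s₁ ∪ s₂, (b ≫ p j) ≫ Sigma.ι (fun _ : I => E) j :=
              he₂.trans (Finset.sum_subset Finset.subset_union_right
                (fun j _ hj => by rw [hv₂ j hj, zero_comp]))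
            calc a + b = ∑ j ∈ s₁ ∪ s₂, ((a + b) ≫ p j) ≫ Sigma.ι (fun _ : I => E) j := by
                  conv_lhs => rw [h₁, h₂]
                  rw [← Finset.sum_add_distrib]
                  exact Finset.sum_congr rfl (fun j _ => by
                    rw [Preadditive.add_comp, Preadditive.add_comp])
              _ = _ := rfl
        neg_mem' := by
          rintro a ⟨s, hv, he⟩
          refine ⟨s, fun j hj => by rw [Preadditive.neg_comp, hv j hj, neg_zero], ?_⟩
          conv_lhs => rw [he]
          rw [← Finset.sum_neg_distrib]
          exact Finset.sum_congr rfl (fun j _ => by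
            rw [Preadditive.neg_comp, Preadditive.neg_comp]) }
    have hgen : ∀ (i : I) (x : K ⟶ E), (x ≫ Sigma.ι (fun _ : I => E) i) ∈ T := by
      intro i x
      refine ⟨{i}, fun j hj => ?_, ?_⟩
      · have : Sigma.ι (fun _ : I => E) i ≫ p j = 0 := by
          simp only [p, colimit.ι_desc, Cofan.mk_ι_app]
          rw [if_neg (fun h => hj (by simp [h]))]
        rw [Category.assoc, this, comp_zero]
      · have : Sigma.ι (fun _ : I => E) i ≫ p i = 𝟙 E := by
          simp [p]
        have h2 : Sigma.ι (fun _ : I => E) i ≫ p i ≫ Sigma.ι (fun _ : I => E) i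
            = Sigma.ι (fun _ : I => E) i := by
          rw [← Category.assoc, this, Category.id_comp]
        simp only [Finset.sum_singleton, Category.assoc, h2]
    letI := hK
    let F := preadditiveCoyoneda.obj (Opposite.op K)
    let D := Discrete.functor (fun _ : I => E)
    let hc : IsColimit (F.mapCocone (colimit.cocone D)) :=
      isColimitOfPreserves F (colimit.isColimit D)
    let cc : Cocone (D ⋙ F) :=
      { pt := AddCommGrpCat.of T
        ι := Discrete.natTrans (fun i => AddCommGrpCat.ofHom
          { toFun := fun x => ⟨x ≫ Sigma.ι (fun _ : I => E) i.as, hgen i.as x⟩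
            map_zero' := Subtype.ext (by exact zero_comp)
            map_add' := fun x y => Subtype.ext (Preadditive.add_comp _ _ _ _ _ _) }) }
    let incl : AddCommGrpCat.of T ⟶ F.obj (∐ fun _ : I => E) := AddCommGrpCat.ofHom T.subtype
    have hcomp : hc.desc cc ≫ incl = 𝟙 _ := by
      apply hc.hom_ext
      intro i
      simp only [Category.comp_id]
      rw [← Category.assoc, hc.fac cc i]
      rfl
    have : incl (hc.desc cc g) = g := by
      have := ConcreteCategory.congr_hom hcomp g
      exact this
    have hmem : Q g := by
      rw [← this]
      exact (hc.desc cc g).2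
    exact hmem
  obtain ⟨s, _, he⟩ := hQ g
  rw [he]
  refine Finset.sum_eq_zero (fun j _ => ?_)
  rw [hg j, zero_comp]

/-- In a compactly generated triangulated category, if `E` is pure-injective (the restricted
Yoneda functor is bijective on morphisms into `E`), then for every set `I` the summation map
`E^{(I)} ⟶ E` factors through the canonical map `E^{(I)} ⟶ E^I`. -/
theorem stmt16 [HasCoproducts.{v} C] [HasProducts.{v} C]
    (Tc : Set C) (hsmall : EssentiallySmall.{v} (ObjectProperty.FullSubcategory (Tc ·)))
    (hcompact : ∀ K ∈ Tc, IsCompactObj K)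
    (hgen : ∀ Y : C, (∀ K ∈ Tc, ∀ f : K ⟶ Y, f = 0) → IsZero Y)
    (E : C)
    (hE : ∀ X : C, Function.Bijective fun φ : X ⟶ E => (restrictedYoneda Tc).map φ)
    (I : Type v) :
    ∃ g : (∏ᶜ fun _ : I => E) ⟶ E,
      (Sigma.desc fun i : I => Pi.lift fun j : I => if i = j then 𝟙 E else 0) ≫ g =
        Sigma.desc fun _ : I => 𝟙 E := by
  let c : (∐ fun _ : I => E) ⟶ (∏ᶜ fun _ : I => E) :=
    Sigma.desc fun i : I => Pi.lift fun j : I => if i = j then 𝟙 E else 0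
  have hcπ : ∀ j : I, c ≫ Pi.π (fun _ : I => E) j
      = Sigma.desc (fun i => if i = j then (𝟙 E) else 0) := by
    intro j
    apply colimit.hom_ext
    intro i
    simp [c]
  obtain ⟨Z, w, h, hT⟩ := Pretriangulated.distinguished_cocone_triangle c
  have hT' := inv_rot_of_distTriang _ hT
  set T' := (Triangle.mk c w h).invRotate with hT'def
  have hmor2 : T'.mor₂ = c := rfl
  have hδ : ∀ K, K ∈ Tc → ∀ h' : K ⟶ T'.obj₁, h' ≫ T'.mor₁ = 0 := by
    intro K hK h'
    apply key_compact ((hcompact K hK) I).some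
    intro j
    rw [← hcπ j]
    have h12 := comp_distTriang_mor_zero₁₂ _ hT'
    rw [hmor2] at h12
    exact ((Category.assoc _ _ _).trans (congrArg (h' ≫ ·) (Category.assoc T'.mor₁ c _).symm)).trans
      ((congrArg (fun t => h' ≫ t ≫ Pi.π (fun _ : I => E) j) h12).trans ((congrArg (h' ≫ ·) zero_comp).trans comp_zero))
  have hzero : T'.mor₁ ≫ Sigma.desc (fun _ : I => 𝟙 E) = 0 := by
    apply (hE T'.obj₁).injective
    show (restrictedYoneda Tc).map (T'.mor₁ ≫ Sigma.desc fun _ : I => 𝟙 E)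
      = (restrictedYoneda Tc).map 0
    ext K' x
    have hx : x ≫ T'.mor₁ = 0 := hδ K'.unop.obj K'.unop.property x
    simp only [restrictedYoneda, Functor.comp_map, Functor.whiskeringLeft_obj_map, Functor.whiskerLeft_app,
      Functor.map_comp, NatTrans.comp_app]
    show (x ≫ T'.mor₁ ≫ Sigma.desc fun _ : I => 𝟙 E) = _
    refine ((Category.assoc x _ _).symm.trans
      ((congrArg (· ≫ Sigma.desc fun _ : I => 𝟙 E) hx).trans zero_comp)).trans ?_
    exact Limits.comp_zero.symm
  obtain ⟨g, hg⟩ := Triangle.yoneda_exact₂ _ hT' (Sigma.desc fun _ : I => 𝟙 E) hzero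
  rw [hmor2] at hg
  exact ⟨g, hg.symm⟩
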